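/- Every compact metrizable ANR is e-closed: if X is an ANR, Y compact metrizable, Z ⊆ Y closed, and (φₙ) a sequence of continuous maps Z → X each extending continuously to Y and converging uniformly to a continuous map φ : Z → X, then φ extends continuously to Y. -/

import Mathlib

open Set Filter

/-- A map `f : Z → X` on a closed subspace `Z` of `Y` extends to a continuous map on `Y`. -/
def ExtendsTo {X Y : Type*} [TopologicalSpace X] [TopologicalSpace Y]
    (Z : Set Y) (f : C(Z, X)) : Prop :=
  ∃ g : C(Y, X), ∀ z : Z, g z.1 = f z

/-- `X` is an ANR: every map into `X` from a closed subspace of a compact metrizable space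
extends to an open neighborhood. -/
def IsANR (X : Type*) [TopologicalSpace X] : Prop :=
  ∀ (Y : Type) [MetricSpace Y] [CompactSpace Y] (Z : Set Y), IsClosed Z →
    ∀ φ : C(Z, X), ∃ U : Set Y, IsOpen U ∧ Z ⊆ U ∧
      ∃ g : C(U, X), ∀ (y : Y) (hz : y ∈ Z) (hu : y ∈ U), g ⟨y, hu⟩ = φ ⟨y, hz⟩

section Aux

attribute [local instance] PiCountable.metricSpace

/-- The Hilbert cube. -/
abbrev QCube : Type := ℕ → unitInterval

lemma qcube_dist_lt {δ : ℝ} (hδ : 0 < δ) :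
    ∃ ε > 0, ∀ x y : QCube, (∀ i, dist (x i) (y i) ≤ ε) → dist x y < δ := by
  obtain ⟨K, hK⟩ : ∃ K : Finset ℕ,
      (∑' i : {j : ℕ // j ∉ K}, ((1 : ℝ)/2) ^ (Encodable.encode (i : ℕ))) < δ/2 :=
    ((tendsto_order.1 (tendsto_tsum_compl_atTop_zero
      fun i : ℕ => ((1 : ℝ)/2) ^ (Encodable.encode i))).2 _ (half_pos hδ)).exists
  set ε : ℝ := min 1 (δ/(2*(K.card+1))) with hε_def
  have hεpos : 0 < ε := lt_min one_pos (by positivity)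
  refine ⟨ε, hεpos, fun x y hxy => ?_⟩
  have hsum := PiCountable.dist_summable x y
  calc dist x y
      = ∑' i : ℕ, min (((1:ℝ)/2) ^ (Encodable.encode i)) (dist (x i) (y i)) :=
        by simpa only [one_div] using PiCountable.dist_eq_tsum x y
    _ = (∑ i ∈ K, min (((1:ℝ)/2) ^ (Encodable.encode i)) (dist (x i) (y i))) +
        ∑' i : {j : ℕ // j ∉ K}, min (((1:ℝ)/2) ^ (Encodable.encode (i:ℕ))) (dist (x i) (y i)) :=
        by rw [one_div]; exact (Summable.sum_add_tsum_compl hsum).symm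
    _ ≤ (∑ _i ∈ K, (δ/(2*(K.card+1)))) +
        ∑' i : {j : ℕ // j ∉ K}, ((1:ℝ)/2) ^ (Encodable.encode (i:ℕ)) := by
        refine add_le_add (Finset.sum_le_sum fun i _ => ?_) (Summable.tsum_le_tsum
          (fun i => min_le_left _ _) (by rw [one_div]; exact hsum.subtype _)
          (summable_geometric_two_encode.subtype _))
        exact (min_le_right _ _).trans ((hxy i).trans (min_le_right _ _))
    _ < δ/2 + δ/2 := by
        refine add_lt_add_of_le_of_lt ?_ hK
        rw [Finset.sum_const, nsmul_eq_mul]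
        rw [mul_div_assoc', div_le_div_iff₀ (by positivity) (by positivity)]
        have : (0:ℝ) ≤ K.card := Nat.cast_nonneg _
        nlinarith [mul_nonneg this hδ.le]
    _ = δ := add_halves δ

lemma exists_embed (X : Type) [MetricSpace X] [CompactSpace X] [Nonempty X] :
    ∃ e : X → QCube, Continuous e ∧ Function.Injective e ∧
      ∀ x y : X, ∀ i : ℕ, |((e x i : ℝ)) - ((e y i : ℝ))| ≤ dist x y := by
  have : TopologicalSpace.SeparableSpace X := inferInstance
  set xs : ℕ → X := TopologicalSpace.denseSeq X with hxs
  have hdense : DenseRange xs := TopologicalSpace.denseRange_denseSeq X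
  refine ⟨fun x i => projIcc 0 1 zero_le_one (dist x (xs i)), ?_, ?_, ?_⟩
  · exact continuous_pi fun i =>
      (LipschitzWith.projIcc _).continuous.comp (continuous_id.dist continuous_const)
  · intro x y hxy
    by_contra hne
    have hd : 0 < dist x y := dist_pos.mpr hne
    set r : ℝ := min (dist x y / 3) (1/2) with hr
    have hrpos : 0 < r := lt_min (by positivity) (by norm_num)
    obtain ⟨i, hi⟩ := hdense.exists_dist_lt x hrpos
    have h1 : (projIcc (0:ℝ) 1 zero_le_one (dist x (xs i)) : ℝ)
        = projIcc (0:ℝ) 1 zero_le_one (dist y (xs i)) :=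
      congrArg Subtype.val (congrFun hxy i)
    rw [coe_projIcc, coe_projIcc] at h1
    have hx2 : dist x (xs i) < 1/2 := hi.trans_le (min_le_right _ _)
    have hx3 : dist x (xs i) < dist x y / 3 := hi.trans_le (min_le_left _ _)
    have h2 : max 0 (min 1 (dist x (xs i))) = dist x (xs i) := by
      rw [min_eq_right (by linarith), max_eq_right dist_nonneg]
    rw [h2] at h1
    have h3 : dist y (xs i) < 1/2 := by
      by_contra h
      push_neg at h
      have hh : (1:ℝ)/2 ≤ max 0 (min 1 (dist y (xs i))) :=
        (le_min (by norm_num) h).trans (le_max_right _ _)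
      rw [← h1] at hh
      linarith
    have h4 : max 0 (min 1 (dist y (xs i))) = dist y (xs i) := by
      rw [min_eq_right (by linarith), max_eq_right dist_nonneg]
    rw [h4] at h1
    have := dist_triangle x (xs i) y
    rw [dist_comm (xs i) y] at this
    linarith
  · intro x y i
    have h := (LipschitzWith.projIcc (a := (0:ℝ)) (b := 1) zero_le_one).dist_le_mul
      (dist x (xs i)) (dist y (xs i))
    rw [NNReal.coe_one, one_mul] at h
    calc |((projIcc (0:ℝ) 1 zero_le_one (dist x (xs i)) : ℝ)) -
          ((projIcc (0:ℝ) 1 zero_le_one (dist y (xs i)) : ℝ))|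
        = dist (projIcc (0:ℝ) 1 zero_le_one (dist x (xs i)))
            (projIcc (0:ℝ) 1 zero_le_one (dist y (xs i))) := by
          rw [Subtype.dist_eq, Real.dist_eq]
      _ ≤ dist (dist x (xs i)) (dist y (xs i)) := h
      _ = |dist x (xs i) - dist y (xs i)| := Real.dist_eq _ _
      _ ≤ dist x y := abs_dist_sub_le _ _ _

end Aux


section Main

attribute [local instance] PiCountable.metricSpace

/-- Every compact metrizable ANR is e-closed: a uniform limit of extendible maps into an ANR
is extendible. -/
theorem isANR_eClosed {X : Type} [MetricSpace X] [CompactSpace X] (hX : IsANR X)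
    {Y : Type} [MetricSpace Y] [CompactSpace Y] (Z : Set Y) (hZ : IsClosed Z)
    (φ : ℕ → C(Z, X)) (φl : C(Z, X))
    (hconv : TendstoUniformly (fun n => ⇑(φ n)) (⇑φl) atTop)
    (hext : ∀ n, ExtendsTo Z (φ n)) :
    ExtendsTo Z φl := by
  rcases isEmpty_or_nonempty Y with hY | hY
  · exact ⟨⟨fun y => isEmptyElim y, continuous_iff_continuousAt.mpr fun y => isEmptyElim y⟩,
      fun z => isEmptyElim (z : Y)⟩
  obtain ⟨g0, _⟩ := hext 0
  haveI : Nonempty X := ⟨g0 (Classical.arbitrary Y)⟩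
  obtain ⟨e, he_cont, he_inj, he_lip⟩ := exists_embed X
  set K : Set QCube := Set.range e with hK_def
  have hK_cpt : IsCompact K := isCompact_range he_cont
  have hK_cl : IsClosed K := hK_cpt.isClosed
  let E : X ≃ₜ K := Continuous.homeoOfEquivCompactToT2
    (f := Equiv.ofInjective e he_inj) (he_cont.subtype_mk _)
  let φinv : C(K, X) := ⟨fun k => E.symm k, E.symm.continuous⟩
  have hφinv : ∀ (x : X) (h : e x ∈ K), φinv ⟨e x, h⟩ = x := by
    intro x h
    have h1 : (⟨e x, h⟩ : K) = E x := Subtype.ext rfl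
    show E.symm ⟨e x, h⟩ = x
    rw [h1, Homeomorph.symm_apply_apply]
  obtain ⟨U, hUo, hKU, g, hg⟩ := hX QCube K hK_cl φinv
  obtain ⟨δ, hδ, hδU⟩ := hK_cpt.exists_thickening_subset_open hUo hKU
  obtain ⟨ε, hε, hεδ⟩ := qcube_dist_lt hδ
  obtain ⟨n, hn⟩ : ∃ n, ∀ z : Z, dist (φl z) (φ n z) < ε :=
    ((Metric.tendstoUniformly_iff.mp hconv) ε hε).exists
  obtain ⟨gn, hgn⟩ := hext n
  haveI : CompactSpace Z := isCompact_iff_compactSpace.mp hZ.isCompact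
  have hTietze : ∀ i : ℕ, ∃ v : C(Y, ℝ), (∀ y, |v y| ≤ ε) ∧
      ∀ z : Z, v z = (e (φl z) i : ℝ) - (e (φ n z) i : ℝ) := by
    intro i
    have hcont : Continuous fun z : Z => (e (φl z) i : ℝ) - (e (φ n z) i : ℝ) := by
      apply Continuous.sub <;>
        exact continuous_subtype_val.comp ((continuous_apply i).comp
          (he_cont.comp (by continuity)))
    obtain ⟨v, hv1, hv2⟩ := BoundedContinuousFunction.exists_norm_eq_restrict_eq_of_closed
      (BoundedContinuousFunction.mkOfCompact ⟨_, hcont⟩) hZ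
    have hnorm : ‖BoundedContinuousFunction.mkOfCompact (⟨_, hcont⟩ : C(Z, ℝ))‖ ≤ ε := by
      rw [BoundedContinuousFunction.norm_le hε.le]
      intro z
      calc ‖(e (φl z) i : ℝ) - (e (φ n z) i : ℝ)‖
          = |(e (φl z) i : ℝ) - (e (φ n z) i : ℝ)| := Real.norm_eq_abs _
        _ ≤ dist (φl z) (φ n z) := he_lip _ _ i
        _ ≤ ε := (hn z).le
    refine ⟨v.toContinuousMap, fun y => ?_, fun z => ?_⟩
    · have h1 := v.norm_coe_le_norm y
      rw [hv1, Real.norm_eq_abs] at h1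
      exact h1.trans hnorm
    · have h2 := DFunLike.congr_fun hv2 z
      simpa using h2
  choose v hv1 hv2 using hTietze
  have hF'cont : Continuous fun y i =>
      projIcc (0:ℝ) 1 zero_le_one ((e (gn y) i : ℝ) + v i y) := by
    refine continuous_pi fun i => (LipschitzWith.projIcc _).continuous.comp (Continuous.add ?_ ?_)
    · exact continuous_subtype_val.comp ((continuous_apply i).comp (he_cont.comp gn.continuous))
    · exact (v i).continuous
  set F' : C(Y, QCube) :=
    ⟨fun y i => projIcc (0:ℝ) 1 zero_le_one ((e (gn y) i : ℝ) + v i y), hF'cont⟩ with hF'_def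
  have hF'Z : ∀ (z : Y) (hz : z ∈ Z), F' z = e (φl ⟨z, hz⟩) := by
    intro z hz
    funext i
    show projIcc (0:ℝ) 1 zero_le_one ((e (gn z) i : ℝ) + v i z) = e (φl ⟨z, hz⟩) i
    rw [hgn ⟨z, hz⟩, hv2 i ⟨z, hz⟩,
      show (e (φ n ⟨z, hz⟩) i : ℝ) + ((e (φl ⟨z, hz⟩) i : ℝ) - (e (φ n ⟨z, hz⟩) i : ℝ))
        = (e (φl ⟨z, hz⟩) i : ℝ) by ring]
    exact projIcc_val zero_le_one _
  have hF'U : ∀ y, F' y ∈ U := by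
    intro y
    apply hδU
    rw [Metric.mem_thickening_iff]
    refine ⟨e (gn y), ⟨gn y, rfl⟩, hεδ _ _ fun i => ?_⟩
    have h1 : e (gn y) i = projIcc (0:ℝ) 1 zero_le_one ((e (gn y) i : ℝ)) :=
      (projIcc_val zero_le_one _).symm
    show dist (projIcc (0:ℝ) 1 zero_le_one ((e (gn y) i : ℝ) + v i y)) (e (gn y) i) ≤ ε
    nth_rewrite 2 [h1]
    refine le_trans ?_ (hv1 i y)
    have h2 := (LipschitzWith.projIcc (a := (0:ℝ)) (b := 1) zero_le_one).dist_le_mul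
      ((e (gn y) i : ℝ) + v i y) ((e (gn y) i : ℝ))
    rw [Real.dist_eq, add_sub_cancel_left] at h2
    simpa using h2
  refine ⟨⟨fun y => g ⟨F' y, hF'U y⟩, g.continuous.comp (F'.continuous.subtype_mk _)⟩, ?_⟩
  intro z
  show g ⟨F' z, hF'U z⟩ = φl z
  have h1 : F' (z : Y) = e (φl z) := by
    have := hF'Z z z.2
    simpa using this
  have hmem : e (φl z) ∈ K := ⟨_, rfl⟩
  calc g ⟨F' (z : Y), hF'U z⟩ = g ⟨e (φl z), hKU hmem⟩ := by
        congr 1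
        exact Subtype.ext h1
    _ = φinv ⟨e (φl z), hmem⟩ := hg _ hmem (hKU hmem)
    _ = φl z := hφinv _ hmem

end Main
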